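/- There exists a quantum strategy for the CHSH + k game using the (k+2)-qubit GHZ state that wins every consistency question with probability 1 and every game question with probability cos²(π/8), so its overall winning probability is 1 − (1−q)·sin²(π/8) where q = 1 − 2/(3^k + 1). -/
import Mathlib


noncomputable section

/-- Pauli σ_z. -/
def pauliZ : Matrix (Fin 2) (Fin 2) ℂ := !![1, 0; 0, -1]

/-- Pauli σ_x. -/
def pauliX : Matrix (Fin 2) (Fin 2) ℂ := !![0, 1; 1, 0]

/-- Bob's observable `(σ_z + (−1)^b σ_x)/√2` on input `b`. -/
def chshBobObs (b : Bool) : Matrix (Fin 2) (Fin 2) ℂ :=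
  (((Real.sqrt 2)⁻¹ : ℝ) : ℂ) • (pauliZ + (if b then (-1 : ℂ) else 1) • pauliX)

/-- Spectral projection of a ±1-valued observable: eigenvalue `+1` gives
outcome bit `false`, `−1` gives outcome bit `true`. -/
def outcomeProj (M : Matrix (Fin 2) (Fin 2) ℂ) (x : Bool) :
    Matrix (Fin 2) (Fin 2) ℂ :=
  ((2 : ℂ))⁻¹ • (1 + (if x then (-1 : ℂ) else 1) • M)

/-- The `m`-qubit GHZ state `(|0…0⟩ + |1…1⟩)/√2`. -/
def ghzVec (m : ℕ) : (Fin m → Fin 2) → ℂ :=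
  fun f => if (∀ i, f i = 0) ∨ (∀ i, f i = 1)
    then (((Real.sqrt 2)⁻¹ : ℝ) : ℂ) else 0

/-- The tensor product over the `m` qubits of single-qubit matrices. -/
def jointOp (m : ℕ) (P : Fin m → Matrix (Fin 2) (Fin 2) ℂ) :
    Matrix (Fin m → Fin 2) (Fin m → Fin 2) ℂ :=
  fun f g => ∏ i, P i (f i) (g i)

/-- Probability (as a complex number) of the outcome tuple `v` when each
player `i` measures the ±1-valued observable `M i` on the GHZ state. -/
def ghzOutcomeProb (m : ℕ) (M : Fin m → Matrix (Fin 2) (Fin 2) ℂ)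
    (v : Fin m → Bool) : ℂ :=
  ∑ f, (starRingEnd ℂ) (ghzVec m f) *
    ((jointOp m (fun i => outcomeProj (M i) (v i))).mulVec (ghzVec m)) f

/-- Player `⟨j+2⟩` is Charlie_j (player `0` is Alice, player `1` is Bob). -/
def charlieIdx (k : ℕ) (j : Fin k) : Fin (k + 2) := ⟨j.val + 2, by omega⟩

/-- The XOR `Z = Z_1 ⊕ ⋯ ⊕ Z_k` of the Charlies' answers. -/
def charlieParity (k : ℕ) (v : Fin (k + 2) → Bool) : Bool :=
  decide ((∑ j : Fin k, (v (charlieIdx k j)).toNat) % 2 = 1)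

/-- Measurement observables on a consistency question of `CHSH + k`: Alice and
the Charlies (inputs `0`) measure σ_z, Bob (unasked, dummy input `0`)
measures his input-`0` observable. -/
def chshkConsObs (k : ℕ) : Fin (k + 2) → Matrix (Fin 2) (Fin 2) ℂ :=
  fun p => if p = 1 then chshBobObs false else pauliZ

/-- Measurement observables on a game question `(a, b)` of `CHSH + k`:
Alice and the Charlies measure σ_z on input 0 and σ_x on input 1 (the
Charlies' input being `1` exactly when `a = 1`), and Bob measures
`(σ_z + (−1)^b σ_x)/√2`. -/
def chshkGameObs (k : ℕ) (a b : Bool) : Fin (k + 2) → Matrix (Fin 2) (Fin 2) ℂ :=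
  fun p => if p = 1 then chshBobObs b else (if a then pauliX else pauliZ)

end

noncomputable section Aux
open Finset

def sgn (x : Bool) : ℂ := if x then -1 else 1

lemma sgn_mul_self (x : Bool) : sgn x * sgn x = 1 := by cases x <;> simp [sgn]

lemma sgn_xor (x y : Bool) : sgn (xor x y) = sgn x * sgn y := by
  cases x <;> cases y <;> simp [sgn]

def rr : ℂ := (((Real.sqrt 2)⁻¹ : ℝ) : ℂ)

lemma rr_sq : rr * rr = 2⁻¹ := by
  have h2 : Real.sqrt 2 * Real.sqrt 2 = 2 := Real.mul_self_sqrt (by norm_num)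
  unfold rr
  rw [← Complex.ofReal_mul, ← mul_inv, h2]
  norm_num

lemma projZ (x : Bool) :
    outcomeProj pauliZ x = if x then !![0,0;0,1] else !![(1:ℂ),0;0,0] := by
  cases x <;>
  · ext i j
    fin_cases i <;> fin_cases j <;>
      simp [outcomeProj, pauliZ, Matrix.one_apply] <;> norm_num

lemma projX (x : Bool) :
    outcomeProj pauliX x = !![2⁻¹, 2⁻¹ * sgn x; 2⁻¹ * sgn x, 2⁻¹] := by
  cases x <;>
  · ext i j
    fin_cases i <;> fin_cases j <;>
      simp [outcomeProj, pauliX, sgn, Matrix.one_apply] <;> norm_num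

lemma projB (b x : Bool) :
    outcomeProj (chshBobObs b) x =
      !![2⁻¹ * (1 + sgn x * rr), 2⁻¹ * (sgn x * sgn b * rr);
         2⁻¹ * (sgn x * sgn b * rr), 2⁻¹ * (1 - sgn x * rr)] := by
  cases b <;> cases x <;>
  · ext i j
    fin_cases i <;> fin_cases j <;>
      simp [outcomeProj, chshBobObs, pauliZ, pauliX, sgn, rr, Matrix.one_apply] <;> ring

end Aux

lemma ghz_corner (m : ℕ) (hm : 0 < m) (M : Fin m → Matrix (Fin 2) (Fin 2) ℂ)
    (v : Fin m → Bool) :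
    ghzOutcomeProb m M v =
      (2:ℂ)⁻¹ * ∑ i : Fin 2, ∑ j : Fin 2, ∏ p, outcomeProj (M p) (v p) i j := by
  classical
  set c0 : Fin m → Fin 2 := fun _ => 0 with hc0
  set c1 : Fin m → Fin 2 := fun _ => 1 with hc1
  have hne : c0 ≠ c1 := by
    intro h
    have := congrFun h ⟨0, hm⟩
    simp [c0, c1] at this
  have hg : ∀ f, ghzVec m f = if f = c0 ∨ f = c1 then (((Real.sqrt 2)⁻¹ : ℝ) : ℂ) else 0 := by
    intro f
    unfold ghzVec
    have : ((∀ i, f i = 0) ∨ (∀ i, f i = 1)) ↔ (f = c0 ∨ f = c1) := by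
      simp [funext_iff, c0, c1]
    rw [if_congr this rfl rfl]
  have hzero : ∀ f, f ≠ c0 → f ≠ c1 → ghzVec m f = 0 := by
    intro f h0 h1; rw [hg]; simp [h0, h1]
  have hval0 : ghzVec m c0 = (((Real.sqrt 2)⁻¹ : ℝ) : ℂ) := by rw [hg]; simp
  have hval1 : ghzVec m c1 = (((Real.sqrt 2)⁻¹ : ℝ) : ℂ) := by rw [hg]; simp
  have hsum : ∀ F : (Fin m → Fin 2) → ℂ, (∀ f, f ≠ c0 → f ≠ c1 → F f = 0) →
      ∑ f, F f = F c0 + F c1 := by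
    intro F hF
    rw [← Finset.sum_pair hne]
    refine (Finset.sum_subset (Finset.subset_univ _) ?_).symm
    intro x _ hx
    simp only [Finset.mem_insert, Finset.mem_singleton, not_or] at hx
    exact hF x hx.1 hx.2
  have hmv : ∀ f, (jointOp m fun i => outcomeProj (M i) (v i)).mulVec (ghzVec m) f
      = (jointOp m fun i => outcomeProj (M i) (v i)) f c0 * ghzVec m c0
        + (jointOp m fun i => outcomeProj (M i) (v i)) f c1 * ghzVec m c1 := by
    intro f
    show ∑ g, _ * ghzVec m g = _
    exact hsum _ (fun g h0 h1 => by rw [hzero g h0 h1]; simp)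
  unfold ghzOutcomeProb
  rw [hsum _ (fun f h0 h1 => by rw [hzero f h0 h1]; simp), hmv, hmv, hval0, hval1]
  have hJ : ∀ i j : Fin 2, jointOp m (fun p => outcomeProj (M p) (v p))
      (fun _ => i) (fun _ => j) = ∏ p, outcomeProj (M p) (v p) i j := fun _ _ => rfl
  have h0 : c0 = fun _ => (0 : Fin 2) := rfl
  have h1 : c1 = fun _ => (1 : Fin 2) := rfl
  rw [Fin.sum_univ_two]
  rw [Fin.sum_univ_two, Fin.sum_univ_two]
  rw [h0, h1, hJ 0 0, hJ 0 1, hJ 1 0, hJ 1 1]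
  have hr2 : (((Real.sqrt 2)⁻¹ : ℝ) : ℂ) * (((Real.sqrt 2)⁻¹ : ℝ) : ℂ) = 2⁻¹ := rr_sq
  have hc : (starRingEnd ℂ) (((Real.sqrt 2)⁻¹ : ℝ) : ℂ) = (((Real.sqrt 2)⁻¹ : ℝ) : ℂ) :=
    Complex.conj_ofReal _
  rw [hc]
  generalize (∏ p, outcomeProj (M p) (v p) 0 0) = A
  generalize (∏ p, outcomeProj (M p) (v p) 0 1) = B
  generalize (∏ p, outcomeProj (M p) (v p) 1 0) = C
  generalize (∏ p, outcomeProj (M p) (v p) 1 1) = D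
  linear_combination (A + B + C + D) * hr2

variable {k : ℕ}

lemma one_eq_succ_zero : (1 : Fin (k + 2)) = Fin.succ 0 := by
  ext; simp

lemma charlieIdx_eq (j : Fin k) : charlieIdx k j = Fin.succ (Fin.succ j) := by
  simp [charlieIdx, Fin.ext_iff]

lemma fzero_ne_one : (0 : Fin (k + 2)) ≠ 1 := by
  simp [Fin.ext_iff]

lemma charlieIdx_ne_one (j : Fin k) : charlieIdx k j ≠ 1 := by
  simp [charlieIdx, Fin.ext_iff]

lemma prod_split (F : Fin (k + 2) → ℂ) :
    ∏ p, F p = F 0 * (F 1 * ∏ j : Fin k, F (charlieIdx k j)) := by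
  rw [Fin.prod_univ_succ, Fin.prod_univ_succ, ← one_eq_succ_zero]
  simp only [← charlieIdx_eq]

lemma sum_split (G : (Fin (k + 2) → Bool) → ℂ) :
    ∑ v, G v = ∑ a : Bool, ∑ b : Bool, ∑ w : Fin k → Bool,
      G (Fin.cons a (Fin.cons b w)) := by
  rw [← Equiv.sum_comp (Fin.consEquiv (fun _ : Fin (k+2) => Bool)) G,
    Fintype.sum_prod_type]
  apply Finset.sum_congr rfl
  intro a _
  show ∑ u : Fin (k+1) → Bool, G (Fin.cons a u) = _
  rw [← Equiv.sum_comp (Fin.consEquiv (fun _ : Fin (k+1) => Bool))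
    (fun u => G (Fin.cons a u)), Fintype.sum_prod_type]
  apply Finset.sum_congr rfl
  intro b _
  show ∑ w : Fin k → Bool, G (Fin.cons a (Fin.cons b w)) = _
  rfl

lemma cons_at_zero (a b : Bool) (w : Fin k → Bool) :
    (Fin.cons a (Fin.cons b w) : Fin (k+2) → Bool) 0 = a := rfl

lemma cons_at_one (a b : Bool) (w : Fin k → Bool) :
    (Fin.cons a (Fin.cons b w) : Fin (k+2) → Bool) 1 = b := by
  rw [one_eq_succ_zero, Fin.cons_succ, Fin.cons_zero]

lemma cons_at_charlie (a b : Bool) (w : Fin k → Bool) (j : Fin k) :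
    (Fin.cons a (Fin.cons b w) : Fin (k+2) → Bool) (charlieIdx k j) = w j := by
  rw [charlieIdx_eq, Fin.cons_succ, Fin.cons_succ]

def pw (w : Fin k → Bool) : Bool := decide ((∑ j, (w j).toNat) % 2 = 1)

lemma charlieParity_cons (a b : Bool) (w : Fin k → Bool) :
    charlieParity k (Fin.cons a (Fin.cons b w)) = pw w := by
  unfold charlieParity pw
  simp only [cons_at_charlie]

lemma prod_sgn (w : Fin k → Bool) : ∏ j, sgn (w j) = sgn (pw w) := by
  have h1 : ∀ j, sgn (w j) = (-1 : ℂ) ^ (w j).toNat := by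
    intro j; cases w j <;> simp [sgn]
  rw [Finset.prod_congr rfl (fun j _ => h1 j), Finset.prod_pow_eq_pow_sum]
  unfold pw sgn
  rcases Nat.even_or_odd (∑ j, (w j).toNat) with h | h
  · rw [Even.neg_one_pow h]
    simp [Nat.even_iff.mp h]
  · rw [Odd.neg_one_pow h]
    simp [Nat.odd_iff.mp h]

lemma sum_pi (f : Fin k → Bool → ℂ) :
    ∑ w : Fin k → Bool, ∏ j, f j (w j) = ∏ j, (f j false + f j true) := by
  classical
  rw [← Fintype.piFinset_univ, ← Finset.prod_univ_sum]
  apply Finset.prod_congr rfl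
  intro j _
  rw [Fintype.sum_bool]
  ring

lemma absorb0 (w : Fin k → Bool) (J : Fin k) (c : ℂ) :
    (if w J then (0:ℂ) else 1) * c * ∏ j, (if w j then (0:ℂ) else 1)
      = c * ∏ j, (if w j then (0:ℂ) else 1) := by
  by_cases h : w J
  · rw [Finset.prod_eq_zero (Finset.mem_univ J) (by simp [h])]
    simp
  · simp [h]

lemma absorb1 (w : Fin k → Bool) (J : Fin k) (c : ℂ) :
    (if w J then (1:ℂ) else 0) * c * ∏ j, (if w j then (1:ℂ) else 0)
      = c * ∏ j, (if w j then (1:ℂ) else 0) := by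
  by_cases h : w J
  · simp [h]
  · rw [Finset.prod_eq_zero (Finset.mem_univ J) (by simp [h])]
    simp

lemma zProb (bb a y : Bool) (w : Fin k → Bool) :
    ghzOutcomeProb (k+2) (fun p => if p = 1 then chshBobObs bb else pauliZ)
      (Fin.cons a (Fin.cons y w))
    = 2⁻¹ * ((if a then 0 else 1) * (2⁻¹ * (1 + sgn y * rr))
               * ∏ j, (if w j then (0:ℂ) else 1)
           + (if a then 1 else 0) * (2⁻¹ * (1 - sgn y * rr))
               * ∏ j, (if w j then (1:ℂ) else 0)) := by
  cases a <;> cases y <;>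
  · rw [ghz_corner _ (by omega)]
    simp only [Fin.sum_univ_two, prod_split]
    simp [fzero_ne_one, charlieIdx_ne_one, cons_at_zero, cons_at_one,
      cons_at_charlie, projZ, projB, sgn,
      apply_ite (fun M : Matrix (Fin 2) (Fin 2) ℂ => M 0 0),
      apply_ite (fun M : Matrix (Fin 2) (Fin 2) ℂ => M 0 1),
      apply_ite (fun M : Matrix (Fin 2) (Fin 2) ℂ => M 1 0),
      apply_ite (fun M : Matrix (Fin 2) (Fin 2) ℂ => M 1 1)]
    try ring

lemma prod_half_sgn (w : Fin k → Bool) :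
    ∏ j, (if w j then -(2⁻¹:ℂ) else 2⁻¹) = (2⁻¹)^k * ∏ j, (if w j then (-1:ℂ) else 1) := by
  calc ∏ j, (if w j then -(2⁻¹:ℂ) else 2⁻¹)
      = ∏ j, ((2⁻¹:ℂ) * (if w j then (-1:ℂ) else 1)) := by
        apply Finset.prod_congr rfl
        intro j _
        by_cases h : w j <;> simp [h]
    _ = (∏ _j : Fin k, (2⁻¹:ℂ)) * ∏ j, (if w j then (-1:ℂ) else 1) :=
        Finset.prod_mul_distrib
    _ = (2⁻¹)^k * ∏ j, (if w j then (-1:ℂ) else 1) := by simp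

lemma prod_half (w : Fin k → Bool) : (∏ _j : Fin k, (2⁻¹:ℂ)) = (2⁻¹)^k := by simp

lemma xProb (bb a y : Bool) (w : Fin k → Bool) :
    ghzOutcomeProb (k+2) (fun p => if p = 1 then chshBobObs bb else pauliX)
      (Fin.cons a (Fin.cons y w))
    = (2⁻¹)^(k+2) * (1 + sgn a * (∏ j, sgn (w j)) * sgn y * sgn bb * rr) := by
  cases a <;> cases y <;> cases bb <;>
  · rw [ghz_corner _ (by omega)]
    simp only [Fin.sum_univ_two, prod_split]
    simp [fzero_ne_one, charlieIdx_ne_one, cons_at_zero, cons_at_one,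
      cons_at_charlie, projX, projB, sgn,
      apply_ite (fun M : Matrix (Fin 2) (Fin 2) ℂ => M 0 0),
      apply_ite (fun M : Matrix (Fin 2) (Fin 2) ℂ => M 0 1),
      apply_ite (fun M : Matrix (Fin 2) (Fin 2) ℂ => M 1 0),
      apply_ite (fun M : Matrix (Fin 2) (Fin 2) ℂ => M 1 1),
      prod_half_sgn, prod_half]
    try ring

lemma bool_collapse (g : Bool → ℂ) (t : Bool) :
    (∑ a : Bool, if a = t then g a else 0) = g t := by
  rw [Finset.sum_ite_eq' Finset.univ t g]
  simp

lemma sum_swap3 (F : Bool → Bool → (Fin k → Bool) → ℂ) :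
    ∑ a : Bool, ∑ y : Bool, ∑ w : Fin k → Bool, F a y w
      = ∑ y : Bool, ∑ w : Fin k → Bool, ∑ a : Bool, F a y w := by
  rw [Finset.sum_comm]
  exact Finset.sum_congr rfl fun y _ => Finset.sum_comm

lemma sum_swap23 (F : Bool → Bool → (Fin k → Bool) → ℂ) :
    ∑ a : Bool, ∑ y : Bool, ∑ w : Fin k → Bool, F a y w
      = ∑ a : Bool, ∑ w : Fin k → Bool, ∑ y : Bool, F a y w :=
  Finset.sum_congr rfl fun a _ => Finset.sum_comm

lemma sumPi0 : ∑ w : Fin k → Bool, ∏ j, (if w j then (0:ℂ) else 1) = 1 := by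
  have h := sum_pi (k := k) (fun _ x => if x then (0:ℂ) else 1)
  rw [h]
  simp

lemma sumPi1 : ∑ w : Fin k → Bool, ∏ j, (if w j then (1:ℂ) else 0) = 1 := by
  have h := sum_pi (k := k) (fun _ x => if x then (1:ℂ) else 0)
  rw [h]
  simp

lemma cos_sq_eq : (((Real.cos (Real.pi/8))^2 : ℝ) : ℂ) = 2⁻¹ * (1 + rr) := by
  have h2 : Real.sqrt 2 * Real.sqrt 2 = 2 := Real.mul_self_sqrt (by norm_num)
  have hne : Real.sqrt 2 ≠ 0 := by positivity
  have h : Real.cos (Real.pi/8)^2 = 2⁻¹ * (1 + (Real.sqrt 2)⁻¹) := by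
    have hc := Real.cos_sq (Real.pi/8)
    rw [show 2*(Real.pi/8) = Real.pi/4 by ring, Real.cos_pi_div_four] at hc
    rw [hc]
    field_simp
    ring_nf
    nlinarith [h2]
  rw [h]
  unfold rr
  push_cast
  ring

lemma cons_sum (J : Fin k) :
    ∑ v : Fin (k + 2) → Bool,
      (if v 0 = v (charlieIdx k J)
        then ghzOutcomeProb (k + 2) (chshkConsObs k) v else 0) = 1 := by
  rw [show chshkConsObs k
      = (fun p => if p = 1 then chshBobObs false else pauliZ) from rfl]
  rw [sum_split]
  simp only [cons_at_zero, cons_at_charlie, zProb]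
  rw [sum_swap3]
  simp only [bool_collapse]
  simp only [absorb0, absorb1]
  simp only [Finset.sum_add_distrib, ← Finset.mul_sum, sumPi0, sumPi1]
  rw [Fintype.sum_bool]
  simp [sgn]
  ring

lemma game_false (b : Bool) :
    ∑ v : Fin (k + 2) → Bool,
      (if v 0 = v 1
        then ghzOutcomeProb (k + 2) (chshkGameObs k false b) v else 0)
      = 2⁻¹ * (1 + rr) := by
  rw [show chshkGameObs k false b
      = (fun p => if p = 1 then chshBobObs b else pauliZ) from rfl]
  rw [sum_split]
  simp only [cons_at_zero, cons_at_one, zProb]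
  simp only [Fintype.sum_bool]
  simp [sgn]
  simp only [Finset.sum_add_distrib, ← Finset.mul_sum, sumPi0, sumPi1]
  ring

lemma game_true (b : Bool) :
    ∑ v : Fin (k + 2) → Bool,
      (if xor (xor (v 0) (charlieParity k v)) (v 1) = b
        then ghzOutcomeProb (k + 2) (chshkGameObs k true b) v else 0)
      = 2⁻¹ * (1 + rr) := by
  rw [show chshkGameObs k true b
      = (fun p => if p = 1 then chshBobObs b else pauliX) from rfl]
  rw [sum_split]
  simp only [cons_at_zero, cons_at_one, charlieParity_cons, xProb]
  rw [sum_swap23]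
  have hxy : ∀ c y d : Bool, (xor c y = d) ↔ (y = xor c d) := by decide
  simp only [hxy]
  simp only [bool_collapse]
  have hterm : ∀ (a d : Bool) (w : Fin k → Bool),
      (1 + sgn a * (∏ j, sgn (w j)) * sgn (xor (xor a (pw w)) d) * sgn d * rr)
        = 1 + rr := by
    intro a d w
    rw [prod_sgn, sgn_xor, sgn_xor]
    cases a <;> cases d <;> cases pw w <;> simp [sgn] <;> try ring
  simp only [hterm]
  simp only [Finset.sum_const, Finset.card_univ, Fintype.card_fun,
    Fintype.card_bool, Fintype.card_fin, nsmul_eq_mul]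
  push_cast
  have h2k : (2:ℂ)^k * (2⁻¹)^k = 1 := by rw [← mul_pow]; norm_num
  rw [pow_add]
  linear_combination ((1 + rr) * 2⁻¹) * h2k


/-- The quantum strategy for the `CHSH + k` game using the `(k+2)`-qubit GHZ
state wins every consistency question with probability `1` and every game
question with probability `cos²(π/8)`; hence with `q = 1 − 2/(3^k + 1)` its
overall winning probability is `1 − (1−q)·sin²(π/8)`. -/
theorem chsh_plus_k_quantum_strategy (k : ℕ) (hk : 1 ≤ k) :
    (∀ J : Fin k,
      ∑ v : Fin (k + 2) → Bool,
        (if v 0 = v (charlieIdx k J)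
          then ghzOutcomeProb (k + 2) (chshkConsObs k) v else 0) = 1) ∧
    (∀ a b : Bool,
      ∑ v : Fin (k + 2) → Bool,
        (if (if a then xor (xor (v 0) (charlieParity k v)) (v 1) = b
             else v 0 = v 1)
          then ghzOutcomeProb (k + 2) (chshkGameObs k a b) v else 0)
        = (((Real.cos (Real.pi / 8))^2 : ℝ) : ℂ)) ∧
    ((((1 - 2 / (3^k + 1) : ℝ)) : ℂ) * ((1 / (k : ℂ)) * ∑ J : Fin k,
        ∑ v : Fin (k + 2) → Bool,
          (if v 0 = v (charlieIdx k J)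
            then ghzOutcomeProb (k + 2) (chshkConsObs k) v else 0))
      + (((2 / (3^k + 1) : ℝ)) : ℂ) * ((1 / 4) * ∑ a : Bool, ∑ b : Bool,
        ∑ v : Fin (k + 2) → Bool,
          (if (if a then xor (xor (v 0) (charlieParity k v)) (v 1) = b
               else v 0 = v 1)
            then ghzOutcomeProb (k + 2) (chshkGameObs k a b) v else 0))
      = (((1 - (2 / (3^k + 1)) * Real.sin (Real.pi / 8)^2 : ℝ)) : ℂ)) := by
  have hgame : ∀ a b : Bool,
      ∑ v : Fin (k + 2) → Bool,
        (if (if a then xor (xor (v 0) (charlieParity k v)) (v 1) = b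
             else v 0 = v 1)
          then ghzOutcomeProb (k + 2) (chshkGameObs k a b) v else 0)
        = 2⁻¹ * (1 + rr) := by
    intro a b
    cases a
    · simp only [Bool.false_eq_true, if_false]
      exact game_false b
    · simp only [if_true]
      exact game_true b
  have hsin : ((Real.sin (Real.pi/8)^2 : ℝ) : ℂ) = 1 - 2⁻¹ * (1 + rr) := by
    rw [show Real.sin (Real.pi/8)^2 = 1 - Real.cos (Real.pi/8)^2 from by
      nlinarith [Real.sin_sq_add_cos_sq (Real.pi/8)]]
    rw [Complex.ofReal_sub, Complex.ofReal_one, cos_sq_eq]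
  refine ⟨fun J => cons_sum J, fun a b => by rw [hgame a b, cos_sq_eq], ?_⟩
  simp only [cons_sum, hgame, Fintype.sum_bool]
  simp only [Finset.sum_const, Finset.card_univ, Fintype.card_fin, nsmul_eq_mul,
    mul_one]
  have hk' : (k:ℂ) ≠ 0 := Nat.cast_ne_zero.mpr (by omega)
  rw [show ((1 - (2/(3^k+1)) * Real.sin (Real.pi/8)^2 : ℝ) : ℂ)
      = 1 - ((2/(3^k+1) : ℝ) : ℂ) * ((Real.sin (Real.pi/8)^2 : ℝ) : ℂ) from by
    rw [Complex.ofReal_sub, Complex.ofReal_mul, Complex.ofReal_one]]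
  rw [hsin, Complex.ofReal_sub, Complex.ofReal_one, one_div, inv_mul_cancel₀ hk']
  ring
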